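/- Let G be a group and let X be a subset of G such that the product set XX⁻¹X is properly contained in G. Then there exists an element g ∈ G such that the right translate X·g is product-free. -/
import Mathlib

open Pointwise

/-- A subset `A` of a group is product-free if there are no `x, y, z ∈ A` with `x * y = z`. -/
def ProductFree {G : Type*} [Group G] (A : Set G) : Prop :=
  ∀ x ∈ A, ∀ y ∈ A, x * y ∉ A

theorem stmt_4 {G : Type*} [Group G] (X : Set G) (h : X * X⁻¹ * X ≠ Set.univ) :
    ∃ g : G, ProductFree (X * {g}) := by
  obtain ⟨y, hy⟩ : ∃ y, y ∉ X * X⁻¹ * X := by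
    by_contra hc
    push_neg at hc
    exact h (Set.eq_univ_of_forall hc)
  refine ⟨y⁻¹, ?_⟩
  rintro a ⟨x₁, hx₁, g, rfl, rfl⟩ b ⟨x₂, hx₂, g, rfl, rfl⟩ ⟨x₃, hx₃, g, rfl, hab⟩
  apply hy
  simp only at hab
  have h2 : x₁ * y⁻¹ * x₂ = x₃ := by
    calc x₁ * y⁻¹ * x₂ = x₁ * y⁻¹ * (x₂ * y⁻¹) * y := by group
    _ = x₃ * y⁻¹ * y := by rw [← hab]
    _ = x₃ := by group
  have key : y = x₂ * x₃⁻¹ * x₁ := by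
    calc y = x₂ * (x₁ * y⁻¹ * x₂)⁻¹ * x₁ := by group
    _ = x₂ * x₃⁻¹ * x₁ := by rw [h2]
  rw [key]
  exact ⟨x₂ * x₃⁻¹, ⟨x₂, hx₂, x₃⁻¹, Set.inv_mem_inv.mpr hx₃, rfl⟩, x₁, hx₁, rfl⟩
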